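/- Vanishing at infinity: Suppose there exist constants M, s₀ > 0 such that |μ(uᵀ𝒳v)| ≤ M and σ(uᵀ𝒳v) ≤ s₀ for all unit vectors u, v, and σ > 0. Then O(X, 𝒳) ≥ (‖X‖₂ − M)/s₀ where ‖X‖₂ is the spectral norm, hence TPD(X, 𝒳) = 1/(1+O(X,𝒳)) → 0 as the Frobenius norm ‖X‖ → ∞. -/

import Mathlib

open Matrix Filter

/-- The spectral norm of a matrix, as `sup_{‖u‖=‖v‖=1} uᵀXv`. -/
noncomputable def specNorm {n₁ n₂ : ℕ} (X : Matrix (Fin n₁) (Fin n₂) ℝ) : ℝ :=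
  sSup {r | ∃ (u : Fin n₁ → ℝ) (v : Fin n₂ → ℝ),
    u ⬝ᵥ u = 1 ∧ v ⬝ᵥ v = 1 ∧ r = u ⬝ᵥ (X *ᵥ v)}

/-- The Frobenius norm of a matrix. -/
noncomputable def frobNorm {n₁ n₂ : ℕ} (X : Matrix (Fin n₁) (Fin n₂) ℝ) : ℝ :=
  Real.sqrt (∑ i, ∑ j, (X i j) ^ 2)

/-- vanishing at infinity.  If `|μ(uᵀ𝒳v)| ≤ M` and `0 < σ(uᵀ𝒳v) ≤ s₀`
uniformly over unit `u, v`, then `O(X) ≥ (‖X‖₂ − M)/s₀` (spectral norm), and hence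
`TPD(X) = 1/(1+O(X)) → 0` as the Frobenius norm `‖X‖ → ∞`. -/
theorem tpd_vanishing_at_infinity {n₁ n₂ : ℕ}
    (m s : (Fin n₁ → ℝ) → (Fin n₂ → ℝ) → ℝ) (M s₀ : ℝ) (hM : 0 < M) (hs₀ : 0 < s₀)
    (hm : ∀ u v, u ⬝ᵥ u = 1 → v ⬝ᵥ v = 1 → |m u v| ≤ M)
    (hs : ∀ u v, u ⬝ᵥ u = 1 → v ⬝ᵥ v = 1 → 0 < s u v ∧ s u v ≤ s₀)
    (O : Matrix (Fin n₁) (Fin n₂) ℝ → ℝ)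
    (hO : ∀ X, O X = sSup {r | ∃ (u : Fin n₁ → ℝ) (v : Fin n₂ → ℝ),
      u ⬝ᵥ u = 1 ∧ v ⬝ᵥ v = 1 ∧ r = |u ⬝ᵥ (X *ᵥ v) - m u v| / s u v})
    (hbdd : ∀ X, BddAbove {r | ∃ (u : Fin n₁ → ℝ) (v : Fin n₂ → ℝ),
      u ⬝ᵥ u = 1 ∧ v ⬝ᵥ v = 1 ∧ r = |u ⬝ᵥ (X *ᵥ v) - m u v| / s u v}) :
    (∀ X, (specNorm X - M) / s₀ ≤ O X) ∧
    Tendsto (fun X : Matrix (Fin n₁) (Fin n₂) ℝ => 1 / (1 + O X))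
      (comap frobNorm atTop) (nhds 0) := by
  -- key bound: for unit u,v, |uᵀXv| ≤ M + s₀ * O X, and 0 ≤ O X
  have key : ∀ (X : Matrix (Fin n₁) (Fin n₂) ℝ) (u : Fin n₁ → ℝ) (v : Fin n₂ → ℝ),
      u ⬝ᵥ u = 1 → v ⬝ᵥ v = 1 → 0 ≤ O X ∧ |u ⬝ᵥ (X *ᵥ v)| ≤ M + s₀ * O X := by
    intro X u v hu hv
    obtain ⟨hspos, hsle⟩ := hs u v hu hv
    have hmem : |u ⬝ᵥ (X *ᵥ v) - m u v| / s u v ∈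
        {r | ∃ (u : Fin n₁ → ℝ) (v : Fin n₂ → ℝ),
          u ⬝ᵥ u = 1 ∧ v ⬝ᵥ v = 1 ∧ r = |u ⬝ᵥ (X *ᵥ v) - m u v| / s u v} :=
      ⟨u, v, hu, hv, rfl⟩
    have hle : |u ⬝ᵥ (X *ᵥ v) - m u v| / s u v ≤ O X := by
      rw [hO X]; exact le_csSup (hbdd X) hmem
    have hnn : 0 ≤ |u ⬝ᵥ (X *ᵥ v) - m u v| / s u v :=
      div_nonneg (abs_nonneg _) hspos.le
    have hOnn : 0 ≤ O X := hnn.trans hle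
    refine ⟨hOnn, ?_⟩
    have h1 : |u ⬝ᵥ (X *ᵥ v) - m u v| = s u v * (|u ⬝ᵥ (X *ᵥ v) - m u v| / s u v) := by
      field_simp
    have h2 : |u ⬝ᵥ (X *ᵥ v) - m u v| ≤ s₀ * O X := by
      rw [h1]
      exact mul_le_mul hsle hle hnn (le_of_lt hs₀)
    calc |u ⬝ᵥ (X *ᵥ v)| ≤ |u ⬝ᵥ (X *ᵥ v) - m u v| + |m u v| := by
          have := abs_sub_abs_le_abs_sub (u ⬝ᵥ (X *ᵥ v)) (m u v); linarith [abs_abs_sub_abs_le_abs_sub (u ⬝ᵥ (X *ᵥ v)) (m u v)]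
      _ ≤ s₀ * O X + M := add_le_add h2 (hm u v hu hv)
      _ = M + s₀ * O X := by ring
  -- part 1
  have part1 : ∀ X, (specNorm X - M) / s₀ ≤ O X := by
    intro X
    by_cases hne : ∃ (u : Fin n₁ → ℝ) (v : Fin n₂ → ℝ), u ⬝ᵥ u = 1 ∧ v ⬝ᵥ v = 1
    · obtain ⟨u₀, v₀, hu₀, hv₀⟩ := hne
      have hOnn := (key X u₀ v₀ hu₀ hv₀).1
      have hsup : specNorm X ≤ M + s₀ * O X := by
        apply Real.sSup_le
        · rintro r ⟨u, v, hu, hv, rfl⟩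
          exact (le_abs_self _).trans (key X u v hu hv).2
        · positivity
      rw [div_le_iff₀ hs₀]; linarith
    · have hempty : {r | ∃ (u : Fin n₁ → ℝ) (v : Fin n₂ → ℝ),
          u ⬝ᵥ u = 1 ∧ v ⬝ᵥ v = 1 ∧ r = u ⬝ᵥ (X *ᵥ v)} = ∅ := by
        ext r; simp only [Set.mem_setOf_eq, Set.mem_empty_iff_false, iff_false]
        rintro ⟨u, v, hu, hv, -⟩; exact hne ⟨u, v, hu, hv⟩
      have hempty2 : {r | ∃ (u : Fin n₁ → ℝ) (v : Fin n₂ → ℝ),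
          u ⬝ᵥ u = 1 ∧ v ⬝ᵥ v = 1 ∧ r = |u ⬝ᵥ (X *ᵥ v) - m u v| / s u v} = ∅ := by
        ext r; simp only [Set.mem_setOf_eq, Set.mem_empty_iff_false, iff_false]
        rintro ⟨u, v, hu, hv, -⟩; exact hne ⟨u, v, hu, hv⟩
      have : specNorm X = 0 := by rw [specNorm, hempty, Real.sSup_empty]
      have hO0 : O X = 0 := by rw [hO X, hempty2, Real.sSup_empty]
      rw [this, hO0]
      rw [div_le_iff₀ hs₀]; linarith
  refine ⟨part1, ?_⟩
  -- part 2
  rcases Nat.eq_zero_or_pos n₁ with h1 | h1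
  · subst h1
    have : (frobNorm ⁻¹' Set.Ici (1:ℝ) : Set (Matrix (Fin 0) (Fin n₂) ℝ)) = ∅ := by
      ext X; simp [frobNorm]
    have hbot : comap (frobNorm : Matrix (Fin 0) (Fin n₂) ℝ → ℝ) atTop = ⊥ := by
      rw [← Filter.empty_mem_iff_bot, ← this]
      exact preimage_mem_comap (Ici_mem_atTop 1)
    rw [hbot]; exact tendsto_bot
  rcases Nat.eq_zero_or_pos n₂ with h2 | h2
  · subst h2
    have : (frobNorm ⁻¹' Set.Ici (1:ℝ) : Set (Matrix (Fin n₁) (Fin 0) ℝ)) = ∅ := by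
      ext X; simp [frobNorm]
    have hbot : comap (frobNorm : Matrix (Fin n₁) (Fin 0) ℝ → ℝ) atTop = ⊥ := by
      rw [← Filter.empty_mem_iff_bot, ← this]
      exact preimage_mem_comap (Ici_mem_atTop 1)
    rw [hbot]; exact tendsto_bot
  -- nondegenerate case
  set i₀ : Fin n₁ := ⟨0, h1⟩
  set j₀ : Fin n₂ := ⟨0, h2⟩
  have hunit1 : ∀ i : Fin n₁, (Pi.single i 1 : Fin n₁ → ℝ) ⬝ᵥ Pi.single i 1 = 1 := by
    intro i; simp [dotProduct, Pi.single_apply, Finset.sum_ite_eq']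
  have hunit2 : ∀ j : Fin n₂, (Pi.single j 1 : Fin n₂ → ℝ) ⬝ᵥ Pi.single j 1 = 1 := by
    intro j; simp [dotProduct, Pi.single_apply, Finset.sum_ite_eq']
  have hentry : ∀ (X : Matrix (Fin n₁) (Fin n₂) ℝ) (i : Fin n₁) (j : Fin n₂),
      |X i j| ≤ M + s₀ * O X := by
    intro X i j
    have := (key X (Pi.single i 1) (Pi.single j 1) (hunit1 i) (hunit2 j)).2
    have hval : (Pi.single i 1 : Fin n₁ → ℝ) ⬝ᵥ (X *ᵥ (Pi.single j 1)) = X i j := by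
      simp [dotProduct, mulVec, Pi.single_apply, Finset.sum_ite_eq', Finset.mul_sum]
    rwa [hval] at this
  have hOnn : ∀ X, 0 ≤ O X := fun X =>
    (key X (Pi.single i₀ 1) (Pi.single j₀ 1) (hunit1 i₀) (hunit2 j₀)).1
  -- frobNorm X ≤ √(n₁n₂) * (M + s₀ O X)
  have hfrob : ∀ X : Matrix (Fin n₁) (Fin n₂) ℝ,
      frobNorm X ≤ Real.sqrt (n₁ * n₂) * (M + s₀ * O X) := by
    intro X
    have hK : (0:ℝ) ≤ M + s₀ * O X := by nlinarith [hOnn X, mul_nonneg hs₀.le (hOnn X)]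
    have hsum : (∑ i, ∑ j, (X i j) ^ 2) ≤ (n₁ * n₂ : ℝ) * (M + s₀ * O X) ^ 2 := by
      calc (∑ i, ∑ j, (X i j) ^ 2) ≤ ∑ i : Fin n₁, ∑ j : Fin n₂, (M + s₀ * O X) ^ 2 := by
            apply Finset.sum_le_sum; intro i _
            apply Finset.sum_le_sum; intro j _
            calc (X i j) ^ 2 = |X i j| ^ 2 := (sq_abs _).symm
              _ ≤ (M + s₀ * O X) ^ 2 := by
                  apply pow_le_pow_left₀ (abs_nonneg _) (hentry X i j)
        _ = (n₁ * n₂ : ℝ) * (M + s₀ * O X) ^ 2 := by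
            simp [Finset.sum_const]; ring
    calc frobNorm X ≤ Real.sqrt ((n₁ * n₂ : ℝ) * (M + s₀ * O X) ^ 2) :=
          Real.sqrt_le_sqrt hsum
      _ = Real.sqrt (n₁ * n₂) * (M + s₀ * O X) := by
          rw [Real.sqrt_mul (by positivity), Real.sqrt_sq hK]
  -- O tends to atTop along comap frobNorm atTop
  have hc : (0:ℝ) < Real.sqrt (n₁ * n₂) := by
    apply Real.sqrt_pos.mpr
    have : (1:ℝ) ≤ (n₁ : ℝ) := by exact_mod_cast h1
    have : (1:ℝ) ≤ (n₂ : ℝ) := by exact_mod_cast h2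
    positivity
  have hOtop : Tendsto O (comap frobNorm atTop) atTop := by
    rw [tendsto_atTop]
    intro b
    have hmem : frobNorm ⁻¹' Set.Ici (Real.sqrt (n₁ * n₂) * (M + s₀ * b) + 1) ∈
        comap (frobNorm : Matrix (Fin n₁) (Fin n₂) ℝ → ℝ) atTop :=
      preimage_mem_comap (Ici_mem_atTop _)
    filter_upwards [hmem] with X hX
    simp only [Set.mem_preimage, Set.mem_Ici] at hX
    have h3 := hfrob X
    have h4 : Real.sqrt (n₁ * n₂) * (M + s₀ * b) < Real.sqrt (n₁ * n₂) * (M + s₀ * O X) := by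
      linarith
    have h5 : M + s₀ * b < M + s₀ * O X := lt_of_mul_lt_mul_left h4 hc.le
    nlinarith
  have h1p : Tendsto (fun X : Matrix (Fin n₁) (Fin n₂) ℝ => 1 + O X)
      (comap frobNorm atTop) atTop := tendsto_atTop_add_const_left _ 1 hOtop
  have := (tendsto_inv_atTop_zero).comp h1p
  simpa [one_div, Function.comp_def] using this
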